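/- Galois-type duality for conditional inverses: let F : M → M be local, increasing, and respect a.e. equality, let F⁻ and F⁺ be its left- and right-continuous versions, and let G_l, G_r be a conditional left-inverse and a conditional right-inverse of F. Then for all m, s ∈ M: (1) F⁻(m) ≤ s a.e. if and only if m ≤ G_r(s) a.e.; (2) F⁺(m) ≥ s a.e. if and only if m ≥ G_l(s) a.e. -/

import Mathlib

open MeasureTheory

variable {Ω : Type*} [MeasurableSpace Ω]

/-- `M`: the measurable functions `Ω → [-∞, ∞]`. -/
def MSp (Ω : Type*) [MeasurableSpace Ω] : Type _ := {f : Ω → EReal // Measurable f}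

/-- The constant function `+∞` as an element of `M`. -/
noncomputable def MSp.mtop (Ω : Type*) [MeasurableSpace Ω] : MSp Ω := ⟨fun _ => ⊤, measurable_const⟩

/-- The constant function `-∞` as an element of `M`. -/
noncomputable def MSp.mbot (Ω : Type*) [MeasurableSpace Ω] : MSp Ω := ⟨fun _ => ⊥, measurable_const⟩

open Classical in
/-- The pointwise piecewise combination `1_A f + 1_{Aᶜ} g`. -/
noncomputable def pcf (A : Set Ω) (f g : Ω → EReal) : Ω → EReal :=
  fun ω => if ω ∈ A then f ω else g ω

/-- The piecewise combination `1_A m + 1_{Aᶜ} n` as an element of `M`. -/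
noncomputable def MSp.pc (A : Set Ω) (hA : MeasurableSet A) (m n : MSp Ω) : MSp Ω :=
  ⟨pcf A m.1 n.1, by classical unfold pcf; exact Measurable.ite hA m.2 n.2⟩

/-- `F : M → M` respects `P`-a.e. equality. -/
def RespectsAE (P : Measure Ω) (F : MSp Ω → MSp Ω) : Prop :=
  ∀ m n : MSp Ω, m.1 =ᵐ[P] n.1 → (F m).1 =ᵐ[P] (F n).1

/-- `F : M → M` is increasing with respect to the `P`-a.e. order. -/
def IncreasingAE (P : Measure Ω) (F : MSp Ω → MSp Ω) : Prop :=
  ∀ m n : MSp Ω, m.1 ≤ᵐ[P] n.1 → (F m).1 ≤ᵐ[P] (F n).1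

/-- `F : M → M` is local: `F(1_A m + 1_{Aᶜ} n) = 1_A F(m) + 1_{Aᶜ} F(n)` a.e. -/
def LocalAE (P : Measure Ω) (F : MSp Ω → MSp Ω) : Prop :=
  ∀ (A : Set Ω) (hA : MeasurableSet A) (m n : MSp Ω),
    (F (MSp.pc A hA m n)).1 =ᵐ[P] pcf A (F m).1 (F n).1

/-- `g` is an essential infimum of the set `S ⊆ M`. -/
def IsEssInfM (P : Measure Ω) (S : Set (MSp Ω)) (g : MSp Ω) : Prop :=
  (∀ f ∈ S, g.1 ≤ᵐ[P] f.1) ∧ ∀ h : MSp Ω, (∀ f ∈ S, h.1 ≤ᵐ[P] f.1) → h.1 ≤ᵐ[P] g.1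

/-- `g` is an essential supremum of the set `S ⊆ M`. -/
def IsEssSupM (P : Measure Ω) (S : Set (MSp Ω)) (g : MSp Ω) : Prop :=
  (∀ f ∈ S, f.1 ≤ᵐ[P] g.1) ∧ ∀ h : MSp Ω, (∀ f ∈ S, f.1 ≤ᵐ[P] h.1) → g.1 ≤ᵐ[P] h.1

/-- `Gl` is a conditional left-inverse of `F`: writing `A_s = {F(+∞) ≥ s}`, one has
`Gl(s) = +∞` a.e. on `A_sᶜ` and, on `A_s`, `Gl(s)` agrees a.e. with an essential infimum
of `{ m ∈ M : F(m) ≥ s a.e. on A_s }`. -/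
def IsCondLeftInv (P : Measure Ω) (F Gl : MSp Ω → MSp Ω) : Prop :=
  ∀ s : MSp Ω,
    (∀ᵐ ω ∂P, ω ∉ {ω' | s.1 ω' ≤ (F (MSp.mtop Ω)).1 ω'} → (Gl s).1 ω = ⊤) ∧
    ∃ g : MSp Ω,
      IsEssInfM P
        {m : MSp Ω | ∀ᵐ ω ∂P, ω ∈ {ω' | s.1 ω' ≤ (F (MSp.mtop Ω)).1 ω'} →
          s.1 ω ≤ (F m).1 ω} g ∧
      ∀ᵐ ω ∂P, ω ∈ {ω' | s.1 ω' ≤ (F (MSp.mtop Ω)).1 ω'} → (Gl s).1 ω = g.1 ω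

/-- `Gr` is a conditional right-inverse of `F`: writing `B_s = {F(-∞) ≤ s}`, one has
`Gr(s) = -∞` a.e. on `B_sᶜ` and, on `B_s`, `Gr(s)` agrees a.e. with an essential supremum
of `{ m ∈ M : F(m) ≤ s a.e. on B_s }`. -/
def IsCondRightInv (P : Measure Ω) (F Gr : MSp Ω → MSp Ω) : Prop :=
  ∀ s : MSp Ω,
    (∀ᵐ ω ∂P, ω ∉ {ω' | (F (MSp.mbot Ω)).1 ω' ≤ s.1 ω'} → (Gr s).1 ω = ⊥) ∧
    ∃ g : MSp Ω,
      IsEssSupM P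
        {m : MSp Ω | ∀ᵐ ω ∂P, ω ∈ {ω' | (F (MSp.mbot Ω)).1 ω' ≤ s.1 ω'} →
          (F m).1 ω ≤ s.1 ω} g ∧
      ∀ᵐ ω ∂P, ω ∈ {ω' | (F (MSp.mbot Ω)).1 ω' ≤ s.1 ω'} → (Gr s).1 ω = g.1 ω

/-- `Fm` is a left-continuous version of `F`: `Fm(m) = -∞` a.e. on `{m = -∞}` and, on
`{m > -∞}`, `Fm(m)` agrees a.e. with an essential supremum of
`{ F(n) : n < m a.e. on {m > -∞} }`. -/
def IsLeftContVersion (P : Measure Ω) (F Fm : MSp Ω → MSp Ω) : Prop :=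
  ∀ m : MSp Ω,
    (∀ᵐ ω ∂P, m.1 ω = ⊥ → (Fm m).1 ω = ⊥) ∧
    ∃ g : MSp Ω,
      IsEssSupM P
        (F '' {n : MSp Ω | ∀ᵐ ω ∂P, ω ∈ {ω' | ⊥ < m.1 ω'} → n.1 ω < m.1 ω}) g ∧
      ∀ᵐ ω ∂P, ω ∈ {ω' | ⊥ < m.1 ω'} → (Fm m).1 ω = g.1 ω

/-- `Fp` is a right-continuous version of `F`: `Fp(m) = +∞` a.e. on `{m = +∞}` and, on
`{m < +∞}`, `Fp(m)` agrees a.e. with an essential infimum of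
`{ F(n) : n > m a.e. on {m < +∞} }`. -/
def IsRightContVersion (P : Measure Ω) (F Fp : MSp Ω → MSp Ω) : Prop :=
  ∀ m : MSp Ω,
    (∀ᵐ ω ∂P, m.1 ω = ⊤ → (Fp m).1 ω = ⊤) ∧
    ∃ g : MSp Ω,
      IsEssInfM P
        (F '' {n : MSp Ω | ∀ᵐ ω ∂P, ω ∈ {ω' | m.1 ω' < ⊤} → m.1 ω < n.1 ω}) g ∧
      ∀ᵐ ω ∂P, ω ∈ {ω' | m.1 ω' < ⊤} → (Fp m).1 ω = g.1 ω

open scoped ENNReal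

noncomputable def MSp.mmax (m n : MSp Ω) : MSp Ω :=
  ⟨fun ω => max (m.1 ω) (n.1 ω), Measurable.max m.2 n.2⟩

lemma exists_seq_essSup (P : Measure Ω) [IsProbabilityMeasure P] (S : Set (MSp Ω))
    (hne : S.Nonempty) (hmax : ∀ m1 ∈ S, ∀ m2 ∈ S, MSp.mmax m1 m2 ∈ S) (g : MSp Ω)
    (hg : IsEssSupM P S g) :
    ∃ c : ℕ → MSp Ω, (∀ k, c k ∈ S) ∧ g.1 =ᵐ[P] fun ω => ⨆ k, (c k).1 ω := by
  classical
  set α : ℚ → ℝ≥0∞ := fun q => ⨆ m : S, P {ω | ((q : ℝ) : EReal) < (m : MSp Ω).1 ω} with hα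
  have hαle : ∀ q : ℚ, ∀ m ∈ S, P {ω | ((q : ℝ) : EReal) < m.1 ω} ≤ α q := by
    intro q m hm; exact le_iSup (fun m : S => P {ω | ((q : ℝ) : EReal) < (m : MSp Ω).1 ω}) ⟨m, hm⟩
  have hαtop : ∀ q : ℚ, α q ≠ ⊤ := by
    intro q
    refine ne_top_of_le_ne_top (by simp : (1 : ℝ≥0∞) ≠ ⊤) (iSup_le fun m => prob_le_one)
  have key : ∀ q : ℚ, ∀ k : ℕ, ∃ m ∈ S,
      α q ≤ P {ω | ((q : ℝ) : EReal) < m.1 ω} + (↑(k + 1) : ℝ≥0∞)⁻¹ := by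
    intro q k
    rcases eq_or_ne (α q) 0 with h0 | h0
    · exact ⟨hne.choose, hne.choose_spec, by simp [h0]⟩
    · have hlt : α q - (↑(k + 1) : ℝ≥0∞)⁻¹ < α q :=
        ENNReal.sub_lt_self (hαtop q) h0 (by simp)
      rw [hα] at hlt
      rcases lt_iSup_iff.1 hlt with ⟨⟨m, hm⟩, hm2⟩
      exact ⟨m, hm, tsub_le_iff_right.1 hm2.le⟩
  choose e he hle using key
  let eqv : ℚ × ℕ ≃ ℕ := Denumerable.eqv (ℚ × ℕ)
  let E : ℕ → MSp Ω := fun n => e (eqv.symm n).1 (eqv.symm n).2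
  have hES : ∀ n, E n ∈ S := fun n => he _ _
  let c : ℕ → MSp Ω := fun k => Nat.rec (E 0) (fun k ck => MSp.mmax ck (E (k + 1))) k
  have hcS : ∀ k, c k ∈ S := by
    intro k; induction k with
    | zero => exact hES 0
    | succ k ih => exact hmax _ ih _ (hES (k + 1))
  have hcmono : Monotone fun k => (c k).1 :=
    monotone_nat_of_le_succ (fun k ω => le_max_left _ _)
  have hEc : ∀ n ω, (E n).1 ω ≤ (c n).1 ω := by
    intro n ω; cases n with
    | zero => exact le_rfl
    | succ n => exact le_max_right _ _
  set g₀ : Ω → EReal := fun ω => ⨆ k, (c k).1 ω with hg₀def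
  have hg₀meas : Measurable g₀ := Measurable.iSup (fun k => (c k).2)
  have hcg₀ : ∀ k ω, (c k).1 ω ≤ g₀ ω := fun k ω => le_iSup (fun k => (c k).1 ω) k
  have hlevel : ∀ q : ℚ, P {ω | ((q : ℝ) : EReal) < g₀ ω} = α q := by
    intro q
    apply le_antisymm
    · have hset : {ω | ((q : ℝ) : EReal) < g₀ ω}
          = ⋃ k, {ω | ((q : ℝ) : EReal) < (c k).1 ω} := by
        ext ω; simp [hg₀def, lt_iSup_iff]
      have hmono : Monotone fun k => {ω | ((q : ℝ) : EReal) < (c k).1 ω} := by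
        intro i j hij ω hω; exact lt_of_lt_of_le hω (hcmono hij ω)
      rw [hset, hmono.directed_le.measure_iUnion]
      exact iSup_le fun k => hαle q _ (hcS k)
    · refine ENNReal.le_of_forall_pos_le_add fun ε hε _ => ?_
      obtain ⟨k, hk⟩ := ENNReal.exists_inv_nat_lt
        (show ((ε : ℝ≥0∞)) ≠ 0 by exact_mod_cast hε.ne')
      have hk1 : (↑(k + 1) : ℝ≥0∞)⁻¹ ≤ (ε : ℝ≥0∞) := by
        refine le_trans (ENNReal.inv_le_inv.2 ?_) hk.le
        exact_mod_cast Nat.le_succ k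
      have hEq : E (eqv (q, k)) = e q k := by simp [E, eqv]
      have hsub : {ω | ((q : ℝ) : EReal) < (e q k).1 ω} ⊆ {ω | ((q : ℝ) : EReal) < g₀ ω} := by
        intro ω hω
        have : (e q k).1 ω ≤ g₀ ω := by
          rw [← hEq]; exact le_trans (hEc _ ω) (hcg₀ _ ω)
        exact lt_of_lt_of_le hω this
      calc α q ≤ P {ω | ((q : ℝ) : EReal) < (e q k).1 ω} + (↑(k + 1) : ℝ≥0∞)⁻¹ := hle q k
        _ ≤ P {ω | ((q : ℝ) : EReal) < g₀ ω} + ε := add_le_add (measure_mono hsub) hk1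
  have hub : ∀ f ∈ S, f.1 ≤ᵐ[P] g₀ := by
    intro f hf
    have hD : ∀ q : ℚ,
        P ({ω | g₀ ω < ((q : ℝ) : EReal)} ∩ {ω | ((q : ℝ) : EReal) < f.1 ω}) = 0 := by
      intro q
      set D := {ω | g₀ ω < ((q : ℝ) : EReal)} ∩ {ω | ((q : ℝ) : EReal) < f.1 ω} with hD
      have hU : P ({ω | ((q : ℝ) : EReal) < f.1 ω} ∪ {ω | ((q : ℝ) : EReal) < g₀ ω}) ≤ α q := by
        have hset : ({ω | ((q : ℝ) : EReal) < f.1 ω} ∪ {ω | ((q : ℝ) : EReal) < g₀ ω})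
            = ⋃ k, {ω | ((q : ℝ) : EReal) < (MSp.mmax f (c k)).1 ω} := by
          ext ω
          simp only [Set.mem_union, Set.mem_setOf_eq, Set.mem_iUnion, hg₀def, lt_iSup_iff,
            MSp.mmax, lt_max_iff]
          constructor
          · rintro (h | ⟨k, h⟩)
            · exact ⟨0, Or.inl h⟩
            · exact ⟨k, Or.inr h⟩
          · rintro ⟨k, h | h⟩
            · exact Or.inl h
            · exact Or.inr ⟨k, h⟩
        have hmono : Monotone fun k => {ω | ((q : ℝ) : EReal) < (MSp.mmax f (c k)).1 ω} := by
          intro i j hij ω hω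
          simp only [Set.mem_setOf_eq, MSp.mmax, lt_max_iff] at hω ⊢
          rcases hω with h | h
          · exact Or.inl h
          · exact Or.inr (lt_of_lt_of_le h (hcmono hij ω))
        rw [hset, hmono.directed_le.measure_iUnion]
        exact iSup_le fun k => hαle q _ (hmax f hf _ (hcS k))
      have hmeas2 : MeasurableSet {ω | ((q : ℝ) : EReal) < g₀ ω} :=
        measurableSet_lt measurable_const hg₀meas
      have hdisj : Disjoint D {ω | ((q : ℝ) : EReal) < g₀ ω} := by
        rw [Set.disjoint_left]
        rintro ω ⟨h1, _⟩ h2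
        simp only [Set.mem_setOf_eq] at h1 h2
        exact absurd (h1.trans h2) (lt_irrefl _)
      have hsub : D ∪ {ω | ((q : ℝ) : EReal) < g₀ ω}
          ⊆ {ω | ((q : ℝ) : EReal) < f.1 ω} ∪ {ω | ((q : ℝ) : EReal) < g₀ ω} := by
        rintro ω (⟨_, h2⟩ | h)
        · exact Or.inl h2
        · exact Or.inr h
      have hcalc : P D + α q ≤ α q := by
        calc P D + α q = P D + P {ω | ((q : ℝ) : EReal) < g₀ ω} := by rw [hlevel q]
          _ = P (D ∪ {ω | ((q : ℝ) : EReal) < g₀ ω}) := (measure_union hdisj hmeas2).symm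
          _ ≤ P ({ω | ((q : ℝ) : EReal) < f.1 ω} ∪ {ω | ((q : ℝ) : EReal) < g₀ ω}) :=
              measure_mono hsub
          _ ≤ α q := hU
      have : P D + α q ≤ 0 + α q := by simpa using hcalc
      simpa using (ENNReal.add_le_add_iff_right (hαtop q)).1 this
    have hnull : P {ω | g₀ ω < f.1 ω} = 0 := by
      have hsub : {ω | g₀ ω < f.1 ω}
          ⊆ ⋃ q : ℚ, ({ω | g₀ ω < ((q : ℝ) : EReal)} ∩ {ω | ((q : ℝ) : EReal) < f.1 ω}) := by
        intro ω hω
        rcases EReal.exists_rat_btwn_of_lt hω with ⟨q, h1, h2⟩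
        exact Set.mem_iUnion.2 ⟨q, h1, h2⟩
      exact measure_mono_null hsub (measure_iUnion_null fun q => hD q)
    rw [Filter.EventuallyLE, ae_iff]
    simpa [not_le] using hnull
  have h1 : g.1 ≤ᵐ[P] g₀ := hg.2 ⟨g₀, hg₀meas⟩ hub
  have h2 : g₀ ≤ᵐ[P] g.1 := by
    have := ae_all_iff.2 fun k => hg.1 (c k) (hcS k)
    filter_upwards [this] with ω hω
    exact iSup_le fun k => hω k
  exact ⟨c, hcS, h1.antisymm h2⟩

lemma galois_left (P : Measure Ω) [IsProbabilityMeasure P]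
    (F Fm Gr : MSp Ω → MSp Ω)
    (hFloc : LocalAE P F) (hFinc : IncreasingAE P F) (hFae : RespectsAE P F)
    (hFm : IsLeftContVersion P F Fm) (hGr : IsCondRightInv P F Gr)
    (m s : MSp Ω) :
    (Fm m).1 ≤ᵐ[P] s.1 ↔ m.1 ≤ᵐ[P] (Gr s).1 := by
  classical
  obtain ⟨hFmbot, g', hg'sup, hg'eq⟩ := hFm m
  obtain ⟨hGrbot, g, hgsup, hgeq⟩ := hGr s
  have hA : MeasurableSet {ω | ⊥ < m.1 ω} := measurableSet_lt measurable_const m.2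
  have hbotmem : MSp.mbot Ω ∈ {n : MSp Ω | ∀ᵐ ω ∂P, ω ∈ {ω' | ⊥ < m.1 ω'} → n.1 ω < m.1 ω} :=
    ae_of_all _ fun ω hω => hω
  have hFbot_le_g' : (F (MSp.mbot Ω)).1 ≤ᵐ[P] g'.1 := hg'sup.1 _ ⟨MSp.mbot Ω, hbotmem, rfl⟩
  -- the approximating sequence from below
  let n_ : ℕ → MSp Ω := fun k =>
    ⟨fun ω => if m.1 ω = ⊤ then ((k : ℝ) : EReal)
      else if m.1 ω = ⊥ then (⊥ : EReal)
      else (((m.1 ω).toReal - ((k : ℝ) + 1)⁻¹ : ℝ) : EReal),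
     Measurable.ite (m.2 (measurableSet_singleton ⊤)) measurable_const
       (Measurable.ite (m.2 (measurableSet_singleton ⊥)) measurable_const
         (measurable_coe_real_ereal.comp
           ((measurable_ereal_toReal.comp m.2).sub measurable_const)))⟩
  have hlt : ∀ k ω, ⊥ < m.1 ω → (n_ k).1 ω < m.1 ω := by
    intro k ω hω
    show (if m.1 ω = ⊤ then ((k : ℝ) : EReal) else if m.1 ω = ⊥ then (⊥ : EReal)
      else (((m.1 ω).toReal - ((k : ℝ) + 1)⁻¹ : ℝ) : EReal)) < m.1 ω
    by_cases ht : m.1 ω = ⊤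
    · rw [if_pos ht, ht]; exact EReal.coe_lt_top _
    · have hb : m.1 ω ≠ ⊥ := hω.ne'
      rw [if_neg ht, if_neg hb]
      conv_rhs => rw [← EReal.coe_toReal ht hb]
      exact EReal.coe_lt_coe_iff.2 (sub_lt_self _ (by positivity))
  have hbotcase : ∀ k ω, m.1 ω = ⊥ → (n_ k).1 ω = ⊥ := by
    intro k ω hb
    show (if m.1 ω = ⊤ then ((k : ℝ) : EReal) else if m.1 ω = ⊥ then (⊥ : EReal)
      else (((m.1 ω).toReal - ((k : ℝ) + 1)⁻¹ : ℝ) : EReal)) = ⊥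
    rw [if_neg (by rw [hb]; exact bot_ne_top), if_pos hb]
  have hreach : ∀ ω z, ⊥ < m.1 ω → (∀ k, (n_ k).1 ω ≤ z) → m.1 ω ≤ z := by
    intro ω z hω hk
    by_contra hzm
    push_neg at hzm
    rcases EReal.exists_rat_btwn_of_lt hzm with ⟨q, hzq, hqm⟩
    by_cases ht : m.1 ω = ⊤
    · obtain ⟨k, hkq⟩ := exists_nat_ge (q : ℝ)
      have hval : ((q : ℝ) : EReal) ≤ (n_ k).1 ω := by
        show ((q : ℝ) : EReal) ≤ (if m.1 ω = ⊤ then ((k : ℝ) : EReal) else _)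
        rw [if_pos ht]
        exact EReal.coe_le_coe_iff.2 hkq
      exact absurd ((hzq.trans_le hval).trans_le (hk k)) (lt_irrefl z)
    · have hb : m.1 ω ≠ ⊥ := hω.ne'
      have hqt : (q : ℝ) < (m.1 ω).toReal := by
        rw [← EReal.coe_toReal ht hb] at hqm
        exact EReal.coe_lt_coe_iff.1 hqm
      have hpos : (0 : ℝ) < (m.1 ω).toReal - q := by linarith
      obtain ⟨k, hky⟩ := exists_nat_gt ((m.1 ω).toReal - (q : ℝ))⁻¹
      have hik : ((k : ℝ) + 1)⁻¹ < (m.1 ω).toReal - q := by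
        rw [inv_lt_comm₀ (by positivity) hpos]
        exact hky.trans (lt_add_one _)
      have hval : ((q : ℝ) : EReal) ≤ (n_ k).1 ω := by
        show ((q : ℝ) : EReal) ≤ (if m.1 ω = ⊤ then ((k : ℝ) : EReal)
          else if m.1 ω = ⊥ then (⊥ : EReal)
          else (((m.1 ω).toReal - ((k : ℝ) + 1)⁻¹ : ℝ) : EReal))
        rw [if_neg ht, if_neg hb]
        exact EReal.coe_le_coe_iff.2 (by linarith)
      exact absurd ((hzq.trans_le hval).trans_le (hk k)) (lt_irrefl z)
  have hnk_fam : ∀ k, n_ k ∈ {n : MSp Ω | ∀ᵐ ω ∂P, ω ∈ {ω' | ⊥ < m.1 ω'} → n.1 ω < m.1 ω} :=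
    fun k => ae_of_all _ fun ω hω => hlt k ω hω
  constructor
  · -- forward
    intro h
    have hAB : ∀ᵐ ω ∂P, ω ∈ {ω' | ⊥ < m.1 ω'} → ω ∈ {ω' | (F (MSp.mbot Ω)).1 ω' ≤ s.1 ω'} := by
      filter_upwards [hFbot_le_g', hg'eq, h] with ω h1 h2 h3 hω
      exact h1.trans ((h2 hω).symm.le.trans h3)
    have hnk_mem : ∀ k, ∀ᵐ ω ∂P,
        ω ∈ {ω' | (F (MSp.mbot Ω)).1 ω' ≤ s.1 ω'} → (F (n_ k)).1 ω ≤ s.1 ω := by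
      intro k
      have hFnk_le_g' : (F (n_ k)).1 ≤ᵐ[P] g'.1 := hg'sup.1 _ ⟨n_ k, hnk_fam k, rfl⟩
      have hpc : n_ k = MSp.pc _ hA (n_ k) (MSp.mbot Ω) := by
        apply Subtype.ext; funext ω
        show (n_ k).1 ω = pcf {ω' | ⊥ < m.1 ω'} (n_ k).1 (MSp.mbot Ω).1 ω
        unfold pcf
        by_cases hω : ω ∈ {ω' | ⊥ < m.1 ω'}
        · rw [if_pos hω]
        · rw [if_neg hω]
          exact hbotcase k ω (le_bot_iff.1 (not_lt.1 hω))
      have hloc := hFloc _ hA (n_ k) (MSp.mbot Ω)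
      rw [← hpc] at hloc
      filter_upwards [hloc, h, hg'eq, hFnk_le_g'] with ω hl hs hg'ω hle hωB
      by_cases hωA : ω ∈ {ω' | ⊥ < m.1 ω'}
      · exact (hle.trans (hg'ω hωA).symm.le).trans hs
      · rw [hl]
        unfold pcf
        rw [if_neg hωA]
        exact hωB
    have hnk_le_g : ∀ k, (n_ k).1 ≤ᵐ[P] g.1 := fun k => hgsup.1 _ (hnk_mem k)
    filter_upwards [ae_all_iff.2 hnk_le_g, hgeq, hGrbot, hAB] with ω h1 h2 h3 h4
    by_cases hωB : ω ∈ {ω' | (F (MSp.mbot Ω)).1 ω' ≤ s.1 ω'}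
    · rw [h2 hωB]
      by_cases hωA : ⊥ < m.1 ω
      · exact hreach ω (g.1 ω) hωA h1
      · rw [le_bot_iff.1 (not_lt.1 hωA)]; exact bot_le
    · rw [h3 hωB]
      exact not_lt.1 (fun hωA => hωB (h4 hωA))
  · -- backward
    intro h
    have hB : MeasurableSet {ω' | (F (MSp.mbot Ω)).1 ω' ≤ s.1 ω'} :=
      measurableSet_le (F (MSp.mbot Ω)).2 s.2
    set Ss : Set (MSp Ω) := {m' : MSp Ω | ∀ᵐ ω ∂P,
      ω ∈ {ω' | (F (MSp.mbot Ω)).1 ω' ≤ s.1 ω'} → (F m').1 ω ≤ s.1 ω} with hSsdef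
    have hSsne : MSp.mbot Ω ∈ Ss := ae_of_all _ fun ω hω => hω
    have hSsmax : ∀ m1 ∈ Ss, ∀ m2 ∈ Ss, MSp.mmax m1 m2 ∈ Ss := by
      intro m1 h1 m2 h2
      have hD : MeasurableSet {ω | m2.1 ω ≤ m1.1 ω} := measurableSet_le m2.2 m1.2
      have hpc : MSp.mmax m1 m2 = MSp.pc _ hD m1 m2 := by
        apply Subtype.ext; funext ω
        show max (m1.1 ω) (m2.1 ω) = pcf {ω' | m2.1 ω' ≤ m1.1 ω'} m1.1 m2.1 ω
        unfold pcf
        by_cases hω : ω ∈ {ω' | m2.1 ω' ≤ m1.1 ω'}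
        · rw [if_pos hω]; exact max_eq_left hω
        · rw [if_neg hω]; exact max_eq_right (le_of_not_ge hω)
      have hloc := hFloc _ hD m1 m2
      rw [← hpc] at hloc
      show ∀ᵐ ω ∂P, ω ∈ {ω' | (F (MSp.mbot Ω)).1 ω' ≤ s.1 ω'} → (F (MSp.mmax m1 m2)).1 ω ≤ s.1 ω
      filter_upwards [hloc, h1, h2] with ω hl hm1 hm2 hωB
      rw [hl]
      unfold pcf
      by_cases hω : ω ∈ {ω' | m2.1 ω' ≤ m1.1 ω'}
      · rw [if_pos hω]; exact hm1 hωB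
      · rw [if_neg hω]; exact hm2 hωB
    obtain ⟨c, hcS, hgc⟩ := exists_seq_essSup P Ss ⟨MSp.mbot Ω, hSsne⟩ hSsmax g hgsup
    have hAB : ∀ᵐ ω ∂P, ω ∈ {ω' | ⊥ < m.1 ω'} → ω ∈ {ω' | (F (MSp.mbot Ω)).1 ω' ≤ s.1 ω'} := by
      filter_upwards [h, hGrbot] with ω h1 h2 hωA
      by_contra hωB
      rw [h2 hωB] at h1
      exact absurd (lt_of_lt_of_le hωA h1) (lt_irrefl _)
    have key : ∀ n, n ∈ {n : MSp Ω | ∀ᵐ ω ∂P, ω ∈ {ω' | ⊥ < m.1 ω'} → n.1 ω < m.1 ω} →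
        ∀ᵐ ω ∂P, ω ∈ {ω' | ⊥ < m.1 ω'} → (F n).1 ω ≤ s.1 ω := by
      intro n hn
      have hks : ∀ k : ℕ, ∀ᵐ ω ∂P,
          (ω ∈ {ω'' | n.1 ω'' < (c k).1 ω''} ∧ ω ∈ {ω' | (F (MSp.mbot Ω)).1 ω' ≤ s.1 ω'}) →
          (F n).1 ω ≤ s.1 ω := by
        intro k
        have hCm : MeasurableSet {ω'' | n.1 ω'' < (c k).1 ω''} := measurableSet_lt n.2 (c k).2
        have hple : (MSp.pc _ hCm n (c k)).1 ≤ᵐ[P] (c k).1 := ae_of_all _ fun ω => by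
          show pcf {ω'' | n.1 ω'' < (c k).1 ω''} n.1 (c k).1 ω ≤ (c k).1 ω
          unfold pcf
          by_cases hω : ω ∈ {ω'' | n.1 ω'' < (c k).1 ω''}
          · rw [if_pos hω]; exact le_of_lt hω
          · rw [if_neg hω]
        have hFle := hFinc _ _ hple
        have hloc := hFloc _ hCm n (c k)
        filter_upwards [hFle, hloc, hcS k] with ω h1 h2 h3
        rintro ⟨hωC, hωB⟩
        have heq : (F n).1 ω = (F (MSp.pc _ hCm n (c k))).1 ω := by
          rw [h2]; exact (if_pos hωC).symm
        rw [heq]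
        exact le_trans h1 (h3 hωB)
      filter_upwards [ae_all_iff.2 hks, hn, h, hgeq, hgc, hAB] with ω h1 h2 h3 h4 h5 h6 hωA
      have hωB := h6 hωA
      have hlt2 : n.1 ω < ⨆ k, (c k).1 ω := by
        have : g.1 ω = ⨆ k, (c k).1 ω := h5
        rw [← this]
        calc n.1 ω < m.1 ω := h2 hωA
          _ ≤ (Gr s).1 ω := h3
          _ = g.1 ω := h4 hωB
      obtain ⟨k, hk⟩ := lt_iSup_iff.1 hlt2
      exact h1 k ⟨hk, hωB⟩
    have hub : ∀ f ∈ (F '' {n : MSp Ω | ∀ᵐ ω ∂P, ω ∈ {ω' | ⊥ < m.1 ω'} → n.1 ω < m.1 ω}),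
        f.1 ≤ᵐ[P] (MSp.pc _ hA s g').1 := by
      rintro f ⟨n, hn, rfl⟩
      filter_upwards [key n hn, hg'sup.1 _ ⟨n, hn, rfl⟩] with ω h1 h2
      show _ ≤ pcf {ω' | ⊥ < m.1 ω'} s.1 g'.1 ω
      unfold pcf
      by_cases hω : ω ∈ {ω' | ⊥ < m.1 ω'}
      · rw [if_pos hω]; exact h1 hω
      · rw [if_neg hω]; exact h2
    have hg'le := hg'sup.2 _ hub
    filter_upwards [hg'le, hg'eq, hFmbot] with ω h1 h2 h3
    by_cases hω : ω ∈ {ω' | ⊥ < m.1 ω'}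
    · rw [h2 hω]
      have : pcf {ω' | ⊥ < m.1 ω'} s.1 g'.1 ω = s.1 ω := by unfold pcf; rw [if_pos hω]
      rw [← this]
      exact h1
    · rw [h3 (le_bot_iff.1 (not_lt.1 hω))]
      exact bot_le

noncomputable def MSp.mneg (m : MSp Ω) : MSp Ω := ⟨fun ω => -(m.1 ω), m.2.neg⟩

lemma MSp.mneg_mneg (m : MSp Ω) : m.mneg.mneg = m :=
  Subtype.ext (funext fun ω => neg_neg _)

lemma MSp.mbot_mneg : (MSp.mbot Ω).mneg = MSp.mtop Ω :=
  Subtype.ext (funext fun _ => EReal.neg_bot)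

lemma mem_mneg_image {S : Set (MSp Ω)} {m : MSp Ω} : m ∈ MSp.mneg '' S ↔ m.mneg ∈ S := by
  constructor
  · rintro ⟨x, hx, rfl⟩; rwa [MSp.mneg_mneg]
  · intro h; exact ⟨m.mneg, h, MSp.mneg_mneg m⟩

noncomputable def dualF (F : MSp Ω → MSp Ω) : MSp Ω → MSp Ω := fun m => (F m.mneg).mneg

lemma localAE_mneg {P : Measure Ω} {F : MSp Ω → MSp Ω} (hF : LocalAE P F) :
    LocalAE P (dualF F) := by
  intro A hA m n
  have hpc : (MSp.pc A hA m n).mneg = MSp.pc A hA m.mneg n.mneg := by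
    apply Subtype.ext; funext ω
    show -(pcf A m.1 n.1 ω) = pcf A m.mneg.1 n.mneg.1 ω
    unfold pcf
    by_cases hω : ω ∈ A
    · rw [if_pos hω, if_pos hω]; exact rfl
    · rw [if_neg hω, if_neg hω]; exact rfl
  filter_upwards [hF A hA m.mneg n.mneg] with ω hω
  show -((F ((MSp.pc A hA m n).mneg)).1 ω) = pcf A (dualF F m).1 (dualF F n).1 ω
  rw [hpc, hω]
  show -(pcf A (F m.mneg).1 (F n.mneg).1 ω) = pcf A (dualF F m).1 (dualF F n).1 ω
  unfold pcf
  by_cases h2 : ω ∈ A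
  · rw [if_pos h2, if_pos h2]; exact rfl
  · rw [if_neg h2, if_neg h2]; exact rfl

lemma increasingAE_mneg {P : Measure Ω} {F : MSp Ω → MSp Ω} (hF : IncreasingAE P F) :
    IncreasingAE P (dualF F) := by
  intro m n hmn
  have h1 : n.mneg.1 ≤ᵐ[P] m.mneg.1 := by
    filter_upwards [hmn] with ω hω
    exact EReal.neg_le_neg_iff.2 hω
  filter_upwards [hF _ _ h1] with ω hω
  exact EReal.neg_le_neg_iff.2 hω

lemma respectsAE_mneg {P : Measure Ω} {F : MSp Ω → MSp Ω} (hF : RespectsAE P F) :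
    RespectsAE P (dualF F) := by
  intro m n hmn
  have h1 : m.mneg.1 =ᵐ[P] n.mneg.1 := by
    filter_upwards [hmn] with ω hω
    show -(m.1 ω) = -(n.1 ω); rw [hω]
  filter_upwards [hF _ _ h1] with ω hω
  show -((F m.mneg).1 ω) = -((F n.mneg).1 ω); rw [hω]

lemma isEssSupM_mneg {P : Measure Ω} {S : Set (MSp Ω)} {g : MSp Ω} (h : IsEssInfM P S g) :
    IsEssSupM P (MSp.mneg '' S) g.mneg := by
  constructor
  · rintro f ⟨x, hx, rfl⟩
    filter_upwards [h.1 x hx] with ω hω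
    exact EReal.neg_le_neg_iff.2 hω
  · intro h' hh'
    have hlo : ∀ f ∈ S, h'.mneg.1 ≤ᵐ[P] f.1 := by
      intro f hf
      filter_upwards [hh' f.mneg ⟨f, hf, rfl⟩] with ω hω
      exact EReal.neg_le.1 hω
    filter_upwards [h.2 h'.mneg hlo] with ω hω
    exact EReal.neg_le.1 hω

lemma isLeftContVersion_mneg {P : Measure Ω} {F Fp : MSp Ω → MSp Ω}
    (h : IsRightContVersion P F Fp) :
    IsLeftContVersion P (dualF F) (dualF Fp) := by
  intro m
  obtain ⟨h1, g, hginf, hgeq⟩ := h m.mneg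
  have hAset : {ω' | ⊥ < m.1 ω'} = {ω' | m.mneg.1 ω' < ⊤} := by
    ext ω
    show ⊥ < m.1 ω ↔ -(m.1 ω) < ⊤
    rw [← EReal.neg_bot]
    exact EReal.neg_lt_neg_iff.symm
  refine ⟨?_, g.mneg, ?_, ?_⟩
  · filter_upwards [h1] with ω hω hbot
    have htop : m.mneg.1 ω = ⊤ := by
      show -(m.1 ω) = ⊤; rw [hbot]; exact EReal.neg_bot
    show -((Fp m.mneg).1 ω) = ⊥
    rw [hω htop]; exact EReal.neg_top
  · have himg : (dualF F) ''
        {n : MSp Ω | ∀ᵐ ω ∂P, ω ∈ {ω' | ⊥ < m.1 ω'} → n.1 ω < m.1 ω}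
        = MSp.mneg '' (F '' {n : MSp Ω | ∀ᵐ ω ∂P,
            ω ∈ {ω' | m.mneg.1 ω' < ⊤} → m.mneg.1 ω < n.1 ω}) := by
      ext f
      constructor
      · rintro ⟨n, hn, rfl⟩
        refine ⟨F n.mneg, ⟨n.mneg, ?_, rfl⟩, rfl⟩
        show ∀ᵐ ω ∂P, ω ∈ {ω' | m.mneg.1 ω' < ⊤} → m.mneg.1 ω < n.mneg.1 ω
        filter_upwards [hn] with ω hω hmem
        have hmem' : ω ∈ {ω' | ⊥ < m.1 ω'} := by rw [hAset]; exact hmem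
        exact EReal.neg_lt_neg_iff.2 (hω hmem')
      · rintro ⟨u, ⟨n, hn, rfl⟩, rfl⟩
        refine ⟨n.mneg, ?_, ?_⟩
        · show ∀ᵐ ω ∂P, ω ∈ {ω' | ⊥ < m.1 ω'} → n.mneg.1 ω < m.1 ω
          filter_upwards [hn] with ω hω hmem
          have hmem' : ω ∈ {ω' | m.mneg.1 ω' < ⊤} := by rw [← hAset]; exact hmem
          exact EReal.neg_lt_comm.1 (hω hmem')
        · show (F n.mneg.mneg).mneg = (F n).mneg
          rw [MSp.mneg_mneg]
    rw [himg]
    exact isEssSupM_mneg hginf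
  · filter_upwards [hgeq] with ω hω hmem
    have hmem' : ω ∈ {ω' | m.mneg.1 ω' < ⊤} := by rw [← hAset]; exact hmem
    show -((Fp m.mneg).1 ω) = -(g.1 ω)
    rw [hω hmem']

lemma isCondRightInv_mneg {P : Measure Ω} {F Gl : MSp Ω → MSp Ω}
    (h : IsCondLeftInv P F Gl) :
    IsCondRightInv P (dualF F) (fun s => (Gl s.mneg).mneg) := by
  intro s
  obtain ⟨h1, g, hginf, hgeq⟩ := h s.mneg
  have hBset : {ω' | (dualF F (MSp.mbot Ω)).1 ω' ≤ s.1 ω'}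
      = {ω' | s.mneg.1 ω' ≤ (F (MSp.mtop Ω)).1 ω'} := by
    ext ω
    show -((F ((MSp.mbot Ω).mneg)).1 ω) ≤ s.1 ω ↔ -(s.1 ω) ≤ (F (MSp.mtop Ω)).1 ω
    rw [MSp.mbot_mneg]
    exact EReal.neg_le
  have hBiff : ∀ ω, (dualF F (MSp.mbot Ω)).1 ω ≤ s.1 ω ↔
      s.mneg.1 ω ≤ (F (MSp.mtop Ω)).1 ω := fun ω => Set.ext_iff.1 hBset ω
  refine ⟨?_, g.mneg, ?_, ?_⟩
  · filter_upwards [h1] with ω hω hmem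
    show -((Gl s.mneg).1 ω) = ⊥
    rw [hω fun hx => hmem ((hBiff ω).2 hx)]; exact EReal.neg_top
  · have hfam : {m' : MSp Ω | ∀ᵐ ω ∂P,
        ω ∈ {ω' | (dualF F (MSp.mbot Ω)).1 ω' ≤ s.1 ω'} → (dualF F m').1 ω ≤ s.1 ω}
        = MSp.mneg '' {m' : MSp Ω | ∀ᵐ ω ∂P,
            ω ∈ {ω' | s.mneg.1 ω' ≤ (F (MSp.mtop Ω)).1 ω'} → s.mneg.1 ω ≤ (F m').1 ω} := by
      ext f
      rw [mem_mneg_image]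
      simp only [Set.mem_setOf_eq, hBset]
      constructor
      · intro hf
        filter_upwards [hf] with ω hω hmem
        exact EReal.neg_le.1 (hω hmem)
      · intro hf
        filter_upwards [hf] with ω hω hmem
        exact EReal.neg_le.1 (hω hmem)
    rw [hfam]
    exact isEssSupM_mneg hginf
  · filter_upwards [hgeq] with ω hω hmem
    show -((Gl s.mneg).1 ω) = -(g.1 ω)
    rw [hω ((hBiff ω).1 hmem)]

theorem condInverse_galois (P : Measure Ω) [IsProbabilityMeasure P]
    (F Fm Fp Gl Gr : MSp Ω → MSp Ω)
    (hFloc : LocalAE P F) (hFinc : IncreasingAE P F) (hFae : RespectsAE P F)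
    (hFm : IsLeftContVersion P F Fm) (hFp : IsRightContVersion P F Fp)
    (hGl : IsCondLeftInv P F Gl) (hGr : IsCondRightInv P F Gr) :
    ∀ m s : MSp Ω,
      ((Fm m).1 ≤ᵐ[P] s.1 ↔ m.1 ≤ᵐ[P] (Gr s).1) ∧
      (s.1 ≤ᵐ[P] (Fp m).1 ↔ (Gl s).1 ≤ᵐ[P] m.1) := by
  intro m s
  constructor
  · exact galois_left P F Fm Gr hFloc hFinc hFae hFm hGr m s
  · have hdual := galois_left P (dualF F) (dualF Fp) (fun s => (Gl s.mneg).mneg)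
      (localAE_mneg hFloc) (increasingAE_mneg hFinc) (respectsAE_mneg hFae)
      (isLeftContVersion_mneg hFp) (isCondRightInv_mneg hGl) m.mneg s.mneg
    simp only [dualF, MSp.mneg_mneg] at hdual
    constructor
    · intro hss
      have h1 : ((Fp m).mneg).1 ≤ᵐ[P] s.mneg.1 := by
        filter_upwards [hss] with ω hω
        exact EReal.neg_le_neg_iff.2 hω
      filter_upwards [hdual.1 h1] with ω hω
      exact EReal.neg_le_neg_iff.1 hω
    · intro hgl
      have h1 : m.mneg.1 ≤ᵐ[P] ((Gl s).mneg).1 := by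
        filter_upwards [hgl] with ω hω
        exact EReal.neg_le_neg_iff.2 hω
      filter_upwards [hdual.2 h1] with ω hω
      exact EReal.neg_le_neg_iff.1 hω
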